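/- arXiv:1307.6915 — 2 statements merged into one kernel-verified Lean document; each statement's English description precedes it below -/
import Mathlib

section
/- Let A be a ring, M an A-module generator, Γ = End_A(M)^op. Then for every A-module X, the counit map M ⊗_Γ Hom_A(M, X) → X, given by m ⊗ f ↦ f(m), is an isomorphism. -/
/-!
STATEMENT 2: For a ring `A`, a generator `M`, and `Γ = End_A(M)^op`, the counit
`M ⊗_Γ Hom_A(M, X) → X`, `m ⊗ f ↦ f(m)`, is an isomorphism for every
`A`-module `X`.

The tensor product over the (noncommutative) ring `Γ` is the quotient of the
tensor product over `ℤ` by the subgroup generated by the relations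
`(m·γ) ⊗ f - m ⊗ (γ·f)`, i.e. `γ(m) ⊗ f - m ⊗ (f ∘ γ)`.  Hence the counit is
an isomorphism iff the evaluation map `e : M ⊗_ℤ Hom_A(M,X) → X` is surjective
with kernel exactly that subgroup.
-/

open TensorProduct

/-- Evaluation, as a `ℤ`-bilinear map `M → Hom_A(M,X) → X`. -/
def evalBilin (A : Type*) [Ring A] (M : Type*) [AddCommGroup M] [Module A M]
    (X : Type*) [AddCommGroup X] [Module A X] :
    M →ₗ[ℤ] ((M →ₗ[A] X) →ₗ[ℤ] X) where
  toFun m :=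
    { toFun := fun f => f m
      map_add' := fun f g => rfl
      map_smul' := fun n f => rfl }
  map_add' m m' := by ext f; simp
  map_smul' n m := by ext f; simp

theorem stmt2 (A : Type*) [Ring A] (M : Type*) [AddCommGroup M] [Module A M]
    (hgen : ∃ (n : ℕ) (i : A →ₗ[A] (Fin n → M)) (p : (Fin n → M) →ₗ[A] A),
      p.comp i = LinearMap.id)
    (X : Type*) [AddCommGroup X] [Module A X] :
    Function.Surjective (TensorProduct.lift (evalBilin A M X)) ∧
      LinearMap.ker (TensorProduct.lift (evalBilin A M X)) =
        Submodule.span ℤ {x : M ⊗[ℤ] (M →ₗ[A] X) |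
          ∃ (m : M) (γ : Module.End A M) (f : M →ₗ[A] X),
            x = γ m ⊗ₜ[ℤ] f - m ⊗ₜ[ℤ] (f.comp γ)} := by
  classical
  obtain ⟨n, i, p, hip⟩ := hgen
  set e := TensorProduct.lift (evalBilin A M X) with he
  have etmul : ∀ (m : M) (f : M →ₗ[A] X), e (m ⊗ₜ[ℤ] f) = f m := by
    intro m f; simp [he, evalBilin]
  set m_ : Fin n → M := i 1 with hm_
  let q_ : Fin n → (M →ₗ[A] A) := fun j =>
    { toFun := fun x => p (Pi.single j x)
      map_add' := fun x y => by simp only [Pi.single_add, map_add]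
      map_smul' := fun a x => by
        simp only [RingHom.id_apply, Pi.single_smul, map_smul] }
  have hsum : ∑ j, q_ j (m_ j) = 1 := by
    have h1 : ∑ j, (Pi.single j (m_ j) : Fin n → M) = i 1 :=
      Finset.univ_sum_single (i 1)
    have h2 : ∑ j, q_ j (m_ j) = p (∑ j, (Pi.single j (m_ j) : Fin n → M)) := by
      rw [map_sum]; rfl
    rw [h2, h1]
    have := LinearMap.congr_fun hip 1
    simpa using this
  let h_ : Fin n → (X →ₗ[ℤ] (M →ₗ[A] X)) := fun j =>
    { toFun := fun y =>
        { toFun := fun x => q_ j x • y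
          map_add' := fun x x' => by simp only [map_add, add_smul]
          map_smul' := fun a x => by
            simp only [RingHom.id_apply, map_smul, smul_eq_mul, mul_smul] }
      map_add' := fun y y' => by ext x; simp [smul_add]
      map_smul' := fun c y => by
        ext x
        simp only [RingHom.id_apply, LinearMap.coe_mk, AddHom.coe_mk,
          LinearMap.smul_apply]
        exact smul_comm _ _ _ }
  let T : X →ₗ[ℤ] M ⊗[ℤ] (M →ₗ[A] X) :=
    ∑ j, (TensorProduct.mk ℤ M (M →ₗ[A] X) (m_ j)) ∘ₗ h_ j
  have hT : ∀ y, T y = ∑ j, m_ j ⊗ₜ[ℤ] (h_ j y) := by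
    intro y; simp [T]
    exact Finset.sum_congr rfl fun j _ => rfl
  have heT : ∀ y, e (T y) = y := by
    intro y
    rw [hT, map_sum]
    simp only [etmul]
    have : ∀ j, (h_ j y) (m_ j) = q_ j (m_ j) • y := fun j => rfl
    simp only [this]
    rw [← Finset.sum_smul, hsum, one_smul]
  have hsurj : Function.Surjective e := fun x => ⟨T x, heT x⟩
  set S := Submodule.span ℤ {x : M ⊗[ℤ] (M →ₗ[A] X) |
      ∃ (m : M) (γ : Module.End A M) (f : M →ₗ[A] X),
        x = γ m ⊗ₜ[ℤ] f - m ⊗ₜ[ℤ] (f.comp γ)} with hS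
  have key : ∀ z : M ⊗[ℤ] (M →ₗ[A] X), z - T (e z) ∈ S := by
    intro z
    induction z using TensorProduct.induction_on with
    | zero => simp only [map_zero, sub_zero]; exact Submodule.zero_mem S
    | tmul m f =>
      let γ : Fin n → Module.End A M := fun j =>
        { toFun := fun x => q_ j x • m
          map_add' := fun x x' => by simp only [map_add, add_smul]
          map_smul' := fun a x => by
            simp only [RingHom.id_apply, map_smul, smul_eq_mul, mul_smul] }
      have hγsum : ∑ j, (γ j) (m_ j) = m := by
        have : ∀ j, (γ j) (m_ j) = q_ j (m_ j) • m := fun j => rfl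
        simp only [this]
        rw [← Finset.sum_smul, hsum, one_smul]
      have hcomp : ∀ j, f.comp (γ j) = (h_ j) (f m) := by
        intro j
        ext x
        show f (q_ j x • m) = q_ j x • f m
        rw [map_smul]
      have h1 : m ⊗ₜ[ℤ] f - T (e (m ⊗ₜ[ℤ] f)) =
          ∑ j, ((γ j) (m_ j) ⊗ₜ[ℤ] f - m_ j ⊗ₜ[ℤ] (f.comp (γ j))) := by
        rw [etmul, hT, Finset.sum_sub_distrib]
        congr 1
        · rw [← TensorProduct.sum_tmul, hγsum]
        · exact Finset.sum_congr rfl fun j _ => by rw [hcomp]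
      rw [h1]
      exact Submodule.sum_mem _ fun j _ =>
        Submodule.subset_span ⟨m_ j, γ j, f, rfl⟩
    | add z w hz hw =>
      have : z + w - T (e (z + w)) = (z - T (e z)) + (w - T (e w)) := by
        rw [map_add, map_add]; abel
      rw [this]; exact Submodule.add_mem S hz hw
  refine ⟨hsurj, le_antisymm ?_ ?_⟩
  · intro z hz
    have hz0 : e z = 0 := hz
    have := key z
    rwa [hz0, map_zero, sub_zero] at this
  · refine Submodule.span_le.mpr ?_
    rintro x ⟨m, γ, f, rfl⟩
    show e (γ m ⊗ₜ[ℤ] f - m ⊗ₜ[ℤ] (f.comp γ)) = 0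
    simp [LinearMap.mem_ker, map_sub, etmul]
end

section
/- Let A be a ring, M an A-module generator, Γ = End_A(M)^op. The functor Hom_A(M, -) restricts to an equivalence between add M (the category of direct summands of finite direct sums of copies of M) and the category of finitely generated projective left Γ-modules. -/
/-!
STATEMENT 5: For a ring `A`, a generator `M` and `Γ = End_A(M)^op`, the functor
`Hom_A(M, -)` restricts to an equivalence `add M ≃ Γ-proj` between the
category of direct summands of finite direct sums of copies of `M` and the
category of finitely generated projective left `Γ`-modules.

The left `Γ`-module structure on `Hom_A(M,X)` is `(op γ) • h = h ∘ γ`.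
The equivalence is expressed by three statements:
* (well-definedness) for `X ∈ add M`, `Hom_A(M,X)` is a finitely generated
  projective `Γ`-module;
* (full faithfulness) every `Γ`-linear map `Hom_A(M,X) → Hom_A(M,Y)` for
  `X, Y ∈ add M` is `g ∘ -` for a unique `A`-linear `g : X → Y`;
* (essential surjectivity) every finitely generated projective `Γ`-module is
  `Γ`-isomorphic to `Hom_A(M,X)` for some direct summand `X` of some `M^n`.
-/

section

variable (A : Type*) [Ring A] (M : Type*) [AddCommGroup M] [Module A M]

/-- `X` belongs to `add M`: it is a direct summand of `M^n` for some `n`. -/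
def InAddM (X : Type*) [AddCommGroup X] [Module A X] : Prop :=
  ∃ (n : ℕ) (i : X →ₗ[A] (Fin n → M)) (p : (Fin n → M) →ₗ[A] X),
    p.comp i = LinearMap.id

variable {A M} in
/-- The left `Γ = End_A(M)ᵒᵖ`-module structure on `Hom_A(M, X)`:
`(op γ) • h = h ∘ γ`. -/
instance instHomModule (X : Type*) [AddCommGroup X] [Module A X] :
    Module (Module.End A M)ᵐᵒᵖ (M →ₗ[A] X) where
  smul γ h := h.comp γ.unop
  one_smul h := by ext m; rfl
  mul_smul γ δ h := by ext m; rfl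
  smul_zero γ := by ext m; rfl
  smul_add γ h h' := by ext m; rfl
  add_smul γ δ h := by
    ext m
    show h ((γ + δ).unop m) = h (γ.unop m) + h (δ.unop m)
    rw [MulOpposite.unop_add, LinearMap.add_apply, map_add]
  zero_smul h := by
    ext m
    show h ((0 : (Module.End A M)ᵐᵒᵖ).unop m) = 0
    rw [MulOpposite.unop_zero, LinearMap.zero_apply, map_zero]

end

section Aux

variable {A : Type*} [Ring A] {M : Type*} [AddCommGroup M] [Module A M]

local notation "Γ" => (Module.End A M)ᵐᵒᵖ

variable {X Y : Type*} [AddCommGroup X] [Module A X] [AddCommGroup Y] [Module A Y]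

lemma smul_hom_def (γ : Γ) (h : M →ₗ[A] X) : γ • h = h.comp γ.unop := rfl

lemma smul_hom_apply (γ : Γ) (h : M →ₗ[A] X) (m : M) : (γ • h) m = h (γ.unop m) := rfl

/-- Postcomposition with an `A`-linear map is `Γ`-linear. -/
def compL (g : X →ₗ[A] Y) : (M →ₗ[A] X) →ₗ[Γ] (M →ₗ[A] Y) where
  toFun h := g.comp h
  map_add' h h' := by ext m; simp
  map_smul' γ h := rfl

@[simp] lemma compL_apply (g : X →ₗ[A] Y) (h : M →ₗ[A] X) : compL g h = g.comp h := rfl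

/-- The `Γ`-linear equivalence `Γ^n ≃ Hom_A(M, M^n)`. -/
def phi (n : ℕ) : (Fin n → Γ) ≃ₗ[Γ] (M →ₗ[A] (Fin n → M)) where
  toFun v :=
    { toFun := fun m j => (v j).unop m
      map_add' := fun m m' => by funext j; simp
      map_smul' := fun a m => by funext j; simp }
  invFun h j := MulOpposite.op ((LinearMap.proj j).comp h)
  map_add' v w := by
    ext m j
    show ((v + w) j).unop m = _
    simp [MulOpposite.unop_add]
  map_smul' γ v := by
    ext m j
    rfl
  left_inv v := by
    funext j
    show MulOpposite.op ((LinearMap.proj (R := A) (φ := fun _ : Fin n => M) j).comp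
      (_ : M →ₗ[A] (Fin n → M))) = v j
    rw [← MulOpposite.op_unop (v j)]
    congr 1
  right_inv h := by
    ext m j
    rfl

@[simp] lemma phi_apply (n : ℕ) (v : Fin n → Γ) (m : M) (j : Fin n) :
    phi (A := A) (M := M) n v m j = (v j).unop m := rfl

end Aux

section Full

variable {A : Type*} [Ring A] {M : Type*} [AddCommGroup M] [Module A M]

local notation "Γ" => (Module.End A M)ᵐᵒᵖ

variable {X Y : Type*} [AddCommGroup X] [Module A X] [AddCommGroup Y] [Module A Y]

lemma full_aux
    (hgen : ∃ (n : ℕ) (i : A →ₗ[A] (Fin n → M)) (p : (Fin n → M) →ₗ[A] A),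
      p.comp i = LinearMap.id)
    (F : (M →ₗ[A] X) →ₗ[Γ] (M →ₗ[A] Y)) :
    ∃! g : X →ₗ[A] Y, ∀ h : M →ₗ[A] X, F h = g.comp h := by
  classical
  obtain ⟨n, i, p, hpi⟩ := hgen
  have hpi' : ∀ a : A, p (i a) = a := fun a => by
    have := LinearMap.ext_iff.mp hpi a
    simpa using this
  set φ : X → Fin n → (M →ₗ[A] X) := fun x j =>
    (LinearMap.toSpanSingleton A X x).comp (p.comp (LinearMap.single A (fun _ => M) j))
    with hφ
  have hφ_apply : ∀ (x : X) (j : Fin n) (m : M), φ x j m = p (Pi.single j m) • x :=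
    fun _ _ _ => rfl
  have hsum : ∀ (x : X) (w : Fin n → M), ∑ j, φ x j (w j) = p w • x := by
    intro x w
    have h1 : ∀ j ∈ Finset.univ, φ x j (w j) = p (Pi.single j (w j)) • x :=
      fun j _ => rfl
    rw [Finset.sum_congr rfl h1, ← Finset.sum_smul, ← map_sum, Finset.univ_sum_single]
  have hkey : ∀ (h : M →ₗ[A] X) (m : M), ∑ j, F (φ (h m) j) (i 1 j) = F h m := by
    intro h m
    have e1 : ∀ j, φ (h m) j =
        (MulOpposite.op ((LinearMap.toSpanSingleton A M m).comp
          (p.comp (LinearMap.single A (fun _ => M) j)))) • h := by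
      intro j
      ext m'
      show p (Pi.single j m') • h m = h (p (Pi.single j m') • m)
      rw [map_smul]
    calc ∑ j, F (φ (h m) j) (i 1 j)
        = ∑ j, F h (p (Pi.single j (i 1 j)) • m) := by
          refine Finset.sum_congr rfl fun j _ => ?_
          rw [e1 j, map_smul]
          rfl
      _ = F h ((∑ j, p (Pi.single j (i 1 j))) • m) := by
          rw [Finset.sum_smul, map_sum]
      _ = F h m := by
          rw [← map_sum, Finset.univ_sum_single, hpi' 1, one_smul]
  let g0 : X →+ Y :=
    { toFun := fun x => ∑ j, F (φ x j) (i 1 j)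
      map_zero' := by
        have h0 : ∀ j, φ (0 : X) j = 0 := fun j => by
          ext m'; simp [hφ_apply]
        simp [h0]
      map_add' := fun x x' => by
        have ha : ∀ j, φ (x + x') j = φ x j + φ x' j := fun j => by
          ext m'; simp [hφ_apply, smul_add]
        simp [ha, Finset.sum_add_distrib] }
  have hg0 : ∀ (h : M →ₗ[A] X) (m : M), g0 (h m) = F h m := hkey
  have hsmul : ∀ (a : A) (x : X), g0 (a • x) = a • g0 x := by
    intro a x
    have hx : a • x = ∑ j, φ x j ((a • i 1) j) := by
      have := hsum x (a • i 1)
      rw [map_smul, hpi' 1, smul_eq_mul, mul_one] at this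
      exact this.symm
    calc g0 (a • x) = ∑ j, g0 (φ x j ((a • i 1) j)) := by rw [hx, map_sum]
      _ = ∑ j, F (φ x j) ((a • i 1) j) :=
          Finset.sum_congr rfl fun j _ => hg0 (φ x j) _
      _ = ∑ j, a • F (φ x j) (i 1 j) := by
          refine Finset.sum_congr rfl fun j _ => ?_
          have hj : (a • i 1) j = a • (i 1 j) := rfl
          rw [hj, map_smul]
      _ = a • ∑ j, F (φ x j) (i 1 j) := (Finset.smul_sum).symm
  refine ⟨{ toFun := g0, map_add' := g0.map_add, map_smul' := hsmul }, ?_, ?_⟩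
  · intro h
    ext m
    exact (hg0 h m).symm
  · intro g' hg'
    ext x
    have hx : x = ∑ j, φ x j (i 1 j) := by
      have := hsum x (i 1)
      rw [hpi' 1, one_smul] at this
      exact this.symm
    show g' x = g0 x
    conv_lhs => rw [hx]
    rw [map_sum]
    calc ∑ j, g' (φ x j (i 1 j)) = ∑ j, F (φ x j) (i 1 j) := by
          refine Finset.sum_congr rfl fun j _ => ?_
          rw [hg' (φ x j)]
          rfl
      _ = g0 x := rfl

end Full

section Part1

variable {A : Type*} [Ring A] {M : Type*} [AddCommGroup M] [Module A M]

local notation "Γ" => (Module.End A M)ᵐᵒᵖ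

lemma part1_aux (X : Type*) [AddCommGroup X] [Module A X] (hX : InAddM A M X) :
    Module.Finite Γ (M →ₗ[A] X) ∧ Module.Projective Γ (M →ₗ[A] X) := by
  obtain ⟨n, iX, pX, hpi⟩ := hX
  have hpi' : ∀ v, pX (iX v) = v := fun v => by
    have := LinearMap.ext_iff.mp hpi v
    simpa using this
  have hsplit : (compL (M := M) pX).comp (compL (M := M) iX) = LinearMap.id := by
    ext h m
    simp [hpi']
  constructor
  · have hsurj : Function.Surjective ((compL (M := M) pX).comp (phi (A := A) (M := M) n).toLinearMap :
        (Fin n → Γ) →ₗ[Γ] (M →ₗ[A] X)) := by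
      intro h
      refine ⟨(phi (A := A) (M := M) n).symm (compL (M := M) iX h), ?_⟩
      simp only [LinearMap.comp_apply, LinearEquiv.coe_coe,
        LinearEquiv.apply_symm_apply]
      exact LinearMap.ext_iff.mp hsplit h
    exact Module.Finite.of_surjective _ hsurj
  · exact Module.Projective.of_split
      ((phi (A := A) (M := M) n).symm.toLinearMap.comp (compL (M := M) iX))
      ((compL (M := M) pX).comp (phi (A := A) (M := M) n).toLinearMap)
      (by ext h m;
          simp only [LinearMap.comp_apply, LinearEquiv.coe_coe,
            LinearEquiv.apply_symm_apply, LinearMap.id_apply]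
          simp [hpi'])

end Part1

section Part3

variable {A : Type*} [Ring A] {M : Type*} [AddCommGroup M] [Module A M]

local notation "Γ" => (Module.End A M)ᵐᵒᵖ

lemma part3_aux
    (hgen : ∃ (n : ℕ) (i : A →ₗ[A] (Fin n → M)) (p : (Fin n → M) →ₗ[A] A),
      p.comp i = LinearMap.id)
    (P : Type*) [AddCommGroup P] [Module Γ P]
    (hfin : Module.Finite Γ P) (hproj : Module.Projective Γ P) :
    ∃ (n : ℕ) (X : Submodule A (Fin n → M)) (c : Submodule A (Fin n → M)),
      IsCompl X c ∧ Nonempty (P ≃ₗ[Γ] (M →ₗ[A] X)) := by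
  classical
  obtain ⟨k, π, hπ⟩ := Module.Finite.exists_fin' Γ P
  obtain ⟨s, hs⟩ := Module.projective_lifting_property π LinearMap.id hπ
  have hs' : ∀ q, π (s q) = q := fun q => by
    have := LinearMap.ext_iff.mp hs q
    simpa using this
  set Ψ := phi (A := A) (M := M) k with hΨ
  set E : (M →ₗ[A] (Fin k → M)) →ₗ[Γ] (M →ₗ[A] (Fin k → M)) :=
    Ψ.toLinearMap ∘ₗ s ∘ₗ π ∘ₗ Ψ.symm.toLinearMap with hE
  have hEapp : ∀ w, E w = Ψ (s (π (Ψ.symm w))) := fun _ => rfl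
  obtain ⟨G, hG, hGu⟩ := full_aux hgen E
  have hGG : G.comp G = G := by
    refine hGu (G.comp G) fun h => ?_
    have h1 : E h = E (E h) := by
      rw [hEapp h, hEapp, LinearEquiv.symm_apply_apply, hs']
    rw [h1, hG h, hG (G.comp h)]
    rfl
  have hGGv : ∀ v, G (G v) = G v := fun v => by
    have := LinearMap.ext_iff.mp hGG v
    simpa using this
  have hfixr : ∀ v ∈ LinearMap.range G, G v = v := by
    rintro v ⟨y, rfl⟩
    exact hGGv y
  have hcompl : IsCompl (LinearMap.range G) (LinearMap.ker G) := by
    constructor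
    · rw [Submodule.disjoint_def]
      rintro x ⟨y, rfl⟩ hx
      rw [LinearMap.mem_ker] at hx
      rw [← hGGv y]
      exact hx
    · rw [codisjoint_iff, eq_top_iff]
      intro v _
      rw [Submodule.mem_sup]
      refine ⟨G v, ⟨v, rfl⟩, v - G v, ?_, by abel⟩
      rw [LinearMap.mem_ker, map_sub, hGGv, sub_self]
  have hfix2 : ∀ q : P, Ψ (s q) = G.comp (Ψ (s q)) := by
    intro q
    have h3 : Ψ (s q) = E (Ψ (s q)) := by
      rw [hEapp, LinearEquiv.symm_apply_apply, hs']
    calc Ψ (s q) = E (Ψ (s q)) := h3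
      _ = G.comp (Ψ (s q)) := hG _
  have hfixmem : ∀ (q : P) (m : M), Ψ (s q) m ∈ LinearMap.range G := by
    intro q m
    refine ⟨Ψ (s q) m, ?_⟩
    exact (LinearMap.ext_iff.mp (hfix2 q) m).symm
  refine ⟨k, LinearMap.range G, LinearMap.ker G, hcompl, ⟨?_⟩⟩
  refine
    { toFun := fun q => LinearMap.codRestrict (LinearMap.range G) (Ψ (s q)) (hfixmem q)
      invFun := fun h => π (Ψ.symm ((LinearMap.range G).subtype.comp h))
      map_add' := fun q q' => by
        refine LinearMap.ext fun m => Subtype.ext ?_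
        simp [LinearMap.codRestrict_apply, map_add]
      map_smul' := fun γ q => by
        refine LinearMap.ext fun m => Subtype.ext ?_
        simp only [LinearMap.codRestrict_apply, map_smul, RingHom.id_apply]
        rfl
      left_inv := fun q => by
        simp only [LinearMap.subtype_comp_codRestrict, LinearEquiv.symm_apply_apply, hs']
      right_inv := fun h => by
        set w := (LinearMap.range G).subtype.comp h with hw
        refine LinearMap.ext fun m => Subtype.ext ?_
        have e2 : Ψ (s (π (Ψ.symm w))) = G.comp w := by
          rw [← hEapp w]; exact hG w
        have e3 := LinearMap.ext_iff.mp e2 m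
        simp only [LinearMap.codRestrict_apply]
        rw [e3]
        show G ((h m : Fin k → M)) = (h m : Fin k → M)
        exact hfixr _ (h m).2 }

end Part3

theorem stmt5 (A : Type u_1) [Ring A] (M : Type u_1) [AddCommGroup M] [Module A M]
    [Module.Finite A M]
    (hgen : ∃ (n : ℕ) (i : A →ₗ[A] (Fin n → M)) (p : (Fin n → M) →ₗ[A] A),
      p.comp i = LinearMap.id) :
    -- `Hom_A(M,-)` sends `add M` into f.g. projective `Γ`-modules
    (∀ (X : Type u_1) [AddCommGroup X] [Module A X], InAddM A M X →
      Module.Finite (Module.End A M)ᵐᵒᵖ (M →ₗ[A] X) ∧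
      Module.Projective (Module.End A M)ᵐᵒᵖ (M →ₗ[A] X)) ∧
    -- full faithfulness on `add M`
    (∀ (X Y : Type u_1) [AddCommGroup X] [Module A X] [AddCommGroup Y] [Module A Y],
      InAddM A M X → InAddM A M Y →
      ∀ F : (M →ₗ[A] X) →ₗ[(Module.End A M)ᵐᵒᵖ] (M →ₗ[A] Y),
        ∃! g : X →ₗ[A] Y, ∀ h : M →ₗ[A] X, F h = g.comp h) ∧
    -- essential surjectivity onto f.g. projective `Γ`-modules
    (∀ (P : Type u_1) [AddCommGroup P] [Module (Module.End A M)ᵐᵒᵖ P],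
      Module.Finite (Module.End A M)ᵐᵒᵖ P →
      Module.Projective (Module.End A M)ᵐᵒᵖ P →
      ∃ (n : ℕ) (X : Submodule A (Fin n → M)) (c : Submodule A (Fin n → M)),
        IsCompl X c ∧
        Nonempty (P ≃ₗ[(Module.End A M)ᵐᵒᵖ] (M →ₗ[A] X))) := by
  refine ⟨fun X _ _ hX => part1_aux X hX,
    fun X Y _ _ _ _ _ _ F => full_aux hgen F,
    fun P _ _ hfin hproj => part3_aux hgen P hfin hproj⟩
end
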